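/- Fix 0 < β < α ≤ 1 and δ > 0. The map G_δ : C([0,1],ℝ) × C_0^{α-Hld}([0,1],ℝ) → C_0^{β-Hld}([0,1],ℝ) is almost compact: whenever (a(n), x(n)) → (a, x) in C([0,1]) × C_0^{α-Hld}([0,1]), there exist a subsequence (a(n_k), x(n_k)) and z ∈ C_0^{β-Hld}([0,1]) such that G_δ(a(n_k), x(n_k)) → z in β-Hölder norm. -/

import Mathlib

open Set Filter Topology

set_option maxHeartbeats 1000000

/-- `x` satisfies a `β`-Hölder bound with constant `C` on `[0,1]`. -/
def HolderWithOn (C β : ℝ) (x : ℝ → ℝ) : Prop :=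
  ∀ s ∈ Icc (0:ℝ) 1, ∀ t ∈ Icc (0:ℝ) 1, |x t - x s| ≤ C * |t - s| ^ β

/-- `x ∈ C_0^{β-Hld}([0,1])`: `x` is `β`-Hölder and `w_β(δ,x) → 0` as `δ → 0`. -/
def MemC0Holder (β : ℝ) (x : ℝ → ℝ) : Prop :=
  (∃ C, HolderWithOn C β x) ∧
  ∀ ε > 0, ∃ δ > 0, ∀ s ∈ Icc (0:ℝ) 1, ∀ t ∈ Icc (0:ℝ) 1,
    |t - s| ≤ δ → |x t - x s| ≤ ε * |t - s| ^ β

/-- Convergence `y n → z` in the `β`-Hölder norm on `[0,1]`. -/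
def TendstoHolder (β : ℝ) (y : ℕ → ℝ → ℝ) (z : ℝ → ℝ) : Prop :=
  Tendsto (fun n => y n 0) atTop (nhds (z 0)) ∧
  ∀ ε > 0, ∃ N, ∀ n ≥ N, ∀ s ∈ Icc (0:ℝ) 1, ∀ t ∈ Icc (0:ℝ) 1,
    |(y n t - z t) - (y n s - z s)| ≤ ε * |t - s| ^ β

/-- The deterministic exit times of `a` at level `δ`, capped at `1`. -/
noncomputable def exitTimes (δ : ℝ) (a : ℝ → ℝ) : ℕ → ℝ
  | 0 => 0
  | k + 1 =>
      sInf ({t : ℝ | exitTimes δ a k < t ∧ δ < |a t - a (exitTimes δ a k)|} ∪ {1})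

/-- `G_δ(a,x)_t = Σ_{k≥1} a_{τ_{k-1}(a)} (x_{t ∧ τ_k(a)} - x_{t ∧ τ_{k-1}(a)})`. -/
noncomputable def Gmap (δ : ℝ) (a x : ℝ → ℝ) (t : ℝ) : ℝ :=
  ∑' k : ℕ,
    a (exitTimes δ a k) * (x (min t (exitTimes δ a (k + 1))) - x (min t (exitTimes δ a k)))

lemma exitTimes_mem (δ : ℝ) (a : ℝ → ℝ) : ∀ k, exitTimes δ a k ∈ Icc (0:ℝ) 1 := by
  intro k
  induction k with
  | zero => exact ⟨le_refl _, zero_le_one⟩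
  | succ k ih =>
    have hbdd : BddBelow ({t : ℝ | exitTimes δ a k < t ∧ δ < |a t - a (exitTimes δ a k)|} ∪ {1}) := by
      refine ⟨0, ?_⟩
      rintro t (⟨ht, _⟩ | ht)
      · exact le_trans ih.1 ht.le
      · simp only [mem_singleton_iff] at ht; simp [ht]
    constructor
    · apply le_csInf ⟨1, by simp⟩
      rintro t (⟨ht, _⟩ | ht)
      · exact le_trans ih.1 ht.le
      · simp only [mem_singleton_iff] at ht; simp [ht]
    · exact csInf_le hbdd (by simp)

lemma exitTimes_le_succ (δ : ℝ) (a : ℝ → ℝ) (k : ℕ) :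
    exitTimes δ a k ≤ exitTimes δ a (k+1) := by
  apply le_csInf ⟨1, by simp⟩
  rintro t (⟨ht, _⟩ | ht)
  · exact ht.le
  · simp only [mem_singleton_iff] at ht; exact ht ▸ (exitTimes_mem δ a k).2

lemma exitTimes_mono (δ : ℝ) (a : ℝ → ℝ) : Monotone (exitTimes δ a) :=
  monotone_nat_of_le_succ (exitTimes_le_succ δ a)

lemma exitTimes_eq_one (δ : ℝ) (a : ℝ → ℝ) {k m : ℕ} (hk : exitTimes δ a k = 1)
    (hkm : k ≤ m) : exitTimes δ a m = 1 :=
  le_antisymm (exitTimes_mem δ a m).2 (hk ▸ exitTimes_mono δ a hkm)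

lemma exitTimes_jump (δ : ℝ) (a : ℝ → ℝ) (ha : ContinuousOn a (Icc 0 1)) (k : ℕ)
    (h1 : exitTimes δ a (k+1) < 1) :
    δ ≤ |a (exitTimes δ a (k+1)) - a (exitTimes δ a k)| := by
  by_contra hcon
  push_neg at hcon
  set τ := exitTimes δ a k with hτ
  set τ' := exitTimes δ a (k+1) with hτ'
  set T : Set ℝ := {t : ℝ | τ < t ∧ δ < |a t - a τ|} ∪ {1} with hT
  have hτ'T : τ' = sInf T := rfl
  have hbdd : BddBelow T := by
    refine ⟨0, ?_⟩
    rintro t (⟨ht, _⟩ | ht)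
    · exact le_trans (exitTimes_mem δ a k).1 ht.le
    · simp only [mem_singleton_iff] at ht; simp [ht]
  have hτ'mem : τ' ∈ Icc (0:ℝ) 1 := exitTimes_mem δ a (k+1)
  set r := δ - |a τ' - a τ| with hr
  have hrpos : 0 < r := by simp [hr]; linarith
  have hc := ha τ' hτ'mem
  rw [Metric.continuousWithinAt_iff] at hc
  obtain ⟨θ, hθ, hcθ⟩ := hc r hrpos
  have hlt : sInf T < min 1 (τ' + θ) := by
    rw [← hτ'T]; exact lt_min h1 (by linarith)
  obtain ⟨u, huT, hu⟩ := exists_lt_of_csInf_lt (⟨1, by simp [hT]⟩ : T.Nonempty) hlt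
  have huS : τ < u ∧ δ < |a u - a τ| := by
    rcases huT with h | h
    · exact h
    · simp only [mem_singleton_iff] at h
      exact absurd (h ▸ hu) (by simp [min_le_left])
  have huge : τ' ≤ u := csInf_le hbdd huT
  have huIcc : u ∈ Icc (0:ℝ) 1 := ⟨le_trans hτ'mem.1 huge, le_of_lt (lt_of_lt_of_le hu (min_le_left _ _))⟩
  have hdist : dist u τ' < θ := by
    rw [Real.dist_eq, abs_of_nonneg (by linarith)]
    have := lt_of_lt_of_le hu (min_le_right _ _)
    linarith
  have := hcθ huIcc hdist
  rw [Real.dist_eq] at this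
  have : |a u - a τ| < δ := by
    calc |a u - a τ| ≤ |a u - a τ'| + |a τ' - a τ| := abs_sub_le _ _ _
    _ < r + |a τ' - a τ| := by linarith
    _ = δ := by simp [hr]
  linarith [huS.2]

lemma exitTimes_count (δ : ℝ) (a : ℝ → ℝ) {η : ℝ}
    (hj : ∀ k, exitTimes δ a (k+1) < 1 → η ≤ exitTimes δ a (k+1) - exitTimes δ a k)
    {K : ℕ} (hK : 1 < K * η) : exitTimes δ a K = 1 := by
  have main : ∀ k : ℕ, exitTimes δ a k = 1 ∨ (k : ℝ) * η ≤ exitTimes δ a k := by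
    intro k
    induction k with
    | zero => right; simp [exitTimes]
    | succ k ih =>
      by_cases h1 : exitTimes δ a (k+1) = 1
      · left; exact h1
      · right
        have hlt : exitTimes δ a (k+1) < 1 :=
          lt_of_le_of_ne (exitTimes_mem δ a (k+1)).2 h1
        have hklt : exitTimes δ a k < 1 := lt_of_le_of_lt (exitTimes_le_succ δ a k) hlt
        have ihk : (k : ℝ) * η ≤ exitTimes δ a k := by
          rcases ih with h | h
          · exact absurd h (ne_of_lt hklt)
          · exact h
        have := hj k hlt
        push_cast
        linarith
  rcases main K with h | h
  · exact h
  · exact absurd ((exitTimes_mem δ a K).2) (not_le.mpr (by linarith))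

lemma Gmap_eq_sum (δ : ℝ) (a x : ℝ → ℝ) {K : ℕ} (hK : exitTimes δ a K = 1) (t : ℝ) :
    Gmap δ a x t = ∑ k ∈ Finset.range K,
      a (exitTimes δ a k) * (x (min t (exitTimes δ a (k + 1))) - x (min t (exitTimes δ a k))) := by
  apply tsum_eq_sum
  intro k hk
  rw [Finset.mem_range, not_lt] at hk
  rw [exitTimes_eq_one δ a hK hk, exitTimes_eq_one δ a hK (le_trans hk (Nat.le_succ k))]
  simp

lemma Gmap_zero (δ : ℝ) (a x : ℝ → ℝ) : Gmap δ a x 0 = 0 := by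
  have h : ∀ k : ℕ, min (0:ℝ) (exitTimes δ a k) = 0 := fun k =>
    min_eq_left (exitTimes_mem δ a k).1
  unfold Gmap
  simp [h]

lemma min_mem_Icc01 {t u : ℝ} (ht : t ∈ Icc (0:ℝ) 1) (hu : u ∈ Icc (0:ℝ) 1) :
    min t u ∈ Icc (0:ℝ) 1 :=
  ⟨le_min ht.1 hu.1, le_trans (min_le_left _ _) ht.2⟩

lemma abs_min_sub_min' (t s u : ℝ) : |min t u - min s u| ≤ |t - s| := by
  refine le_trans (abs_min_sub_min_le_max _ _ _ _) ?_
  simp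

lemma abs_min_sub_min'' (t u v : ℝ) : |min t u - min t v| ≤ |u - v| := by
  refine le_trans (abs_min_sub_min_le_max _ _ _ _) ?_
  simp

lemma sum_inc_bound {K : ℕ} (A' X' : ℝ → ℝ) (τ : ℕ → ℝ) (hτ : ∀ j, τ j ∈ Icc (0:ℝ) 1)
    {Ma Cx α : ℝ} (hα : 0 < α) (hMa0 : 0 ≤ Ma) (hCx0 : 0 ≤ Cx)
    (hMa : ∀ u ∈ Icc (0:ℝ) 1, |A' u| ≤ Ma)
    (hCx : ∀ s ∈ Icc (0:ℝ) 1, ∀ t ∈ Icc (0:ℝ) 1, |X' t - X' s| ≤ Cx * |t - s| ^ α) :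
    ∀ s ∈ Icc (0:ℝ) 1, ∀ t ∈ Icc (0:ℝ) 1,
    |(∑ j ∈ Finset.range K, A' (τ j) * (X' (min t (τ (j+1))) - X' (min t (τ j))))
      - ∑ j ∈ Finset.range K, A' (τ j) * (X' (min s (τ (j+1))) - X' (min s (τ j)))|
      ≤ (K : ℝ) * (2*Ma*Cx) * |t - s| ^ α := by
  intro s hs t ht
  have hpow : (0:ℝ) ≤ |t - s| ^ α := Real.rpow_nonneg (abs_nonneg _) _
  rw [← Finset.sum_sub_distrib]
  refine le_trans (Finset.abs_sum_le_sum_abs _ _) ?_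
  have hterm : ∀ j ∈ Finset.range K,
      |A' (τ j) * (X' (min t (τ (j+1))) - X' (min t (τ j)))
        - A' (τ j) * (X' (min s (τ (j+1))) - X' (min s (τ j)))|
      ≤ 2*Ma*Cx * |t - s| ^ α := by
    intro j _
    have key : ∀ u : ℝ, u ∈ Icc (0:ℝ) 1 → |X' (min t u) - X' (min s u)| ≤ Cx * |t - s| ^ α := by
      intro u hu
      refine le_trans (hCx _ (min_mem_Icc01 hs hu) _ (min_mem_Icc01 ht hu)) ?_
      have h1 : |min t u - min s u| ≤ |t - s| := abs_min_sub_min' t s u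
      have := Real.rpow_le_rpow (abs_nonneg _) h1 hα.le
      nlinarith
    have e : A' (τ j) * (X' (min t (τ (j+1))) - X' (min t (τ j)))
        - A' (τ j) * (X' (min s (τ (j+1))) - X' (min s (τ j)))
        = A' (τ j) * ((X' (min t (τ (j+1))) - X' (min s (τ (j+1))))
            - (X' (min t (τ j)) - X' (min s (τ j)))) := by ring
    rw [e, abs_mul]
    have h1 := key (τ (j+1)) (hτ (j+1))
    have h2 := key (τ j) (hτ j)
    have h3 : |(X' (min t (τ (j+1))) - X' (min s (τ (j+1))))
        - (X' (min t (τ j)) - X' (min s (τ j)))| ≤ 2 * (Cx * |t - s| ^ α) := by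
      refine le_trans (abs_sub _ _) (by linarith)
    have h4 := hMa (τ j) (hτ j)
    have h5 : (0:ℝ) ≤ |(X' (min t (τ (j+1))) - X' (min s (τ (j+1))))
        - (X' (min t (τ j)) - X' (min s (τ j)))| := abs_nonneg _
    nlinarith [abs_nonneg (A' (τ j))]
  refine le_trans (Finset.sum_le_sum hterm) ?_
  rw [Finset.sum_const, Finset.card_range, nsmul_eq_mul]
  ring_nf
  exact le_refl _

lemma holder_small {C α β : ℝ} (hβ : 0 < β) (hβα : β < α) (hC : 0 ≤ C)
    {ε : ℝ} (hε : 0 < ε) :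
    ∃ ρ > 0, ρ ≤ 1 ∧ ∀ f : ℝ → ℝ,
      (∀ s ∈ Icc (0:ℝ) 1, ∀ t ∈ Icc (0:ℝ) 1, |f t - f s| ≤ C * |t - s| ^ α) →
      ∀ s ∈ Icc (0:ℝ) 1, ∀ t ∈ Icc (0:ℝ) 1,
      |t - s| ≤ ρ → |f t - f s| ≤ ε * |t - s| ^ β := by
  have hab : (0:ℝ) < α - β := by linarith
  have hq : (0:ℝ) < ε / (C + 1) := div_pos hε (by linarith)
  set ρ : ℝ := min 1 ((ε / (C + 1)) ^ (α - β)⁻¹) with hρdef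
  have hρpos : 0 < ρ := lt_min one_pos (Real.rpow_pos_of_pos hq _)
  refine ⟨ρ, hρpos, min_le_left _ _, ?_⟩
  intro f hf s hs t ht hts
  rcases eq_or_lt_of_le (abs_nonneg (t - s)) with h0 | h0
  · have : t - s = 0 := abs_eq_zero.mp h0.symm
    have h1 := hf s hs t ht
    rw [this, abs_zero] at h1 ⊢
    rw [Real.zero_rpow (by linarith : α ≠ 0)] at h1
    rw [Real.zero_rpow (by linarith : β ≠ 0)]
    simpa using h1
  · have hsplit : |t - s| ^ α = |t - s| ^ (α - β) * |t - s| ^ β := by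
      rw [← Real.rpow_add h0]; ring_nf
    have hρpow : ρ ^ (α - β) ≤ ε / (C + 1) := by
      have h1 : ρ ≤ (ε / (C + 1)) ^ (α - β)⁻¹ := min_le_right _ _
      have h2 := Real.rpow_le_rpow hρpos.le h1 hab.le
      rwa [Real.rpow_inv_rpow hq.le hab.ne'] at h2
    have h3 : |t - s| ^ (α - β) ≤ ε / (C + 1) :=
      le_trans (Real.rpow_le_rpow (abs_nonneg _) hts hab.le) hρpow
    have h4 : C * |t - s| ^ (α - β) ≤ ε := by
      calc C * |t - s| ^ (α - β) ≤ C * (ε / (C + 1)) :=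
            mul_le_mul_of_nonneg_left h3 hC
      _ ≤ ε := by
            rw [div_eq_inv_mul, ← mul_assoc]
            have : C * (C + 1)⁻¹ ≤ 1 := by
              rw [mul_inv_le_iff₀ (by linarith)]; linarith
            nlinarith
    calc |f t - f s| ≤ C * |t - s| ^ α := hf s hs t ht
    _ = C * |t - s| ^ (α - β) * |t - s| ^ β := by rw [hsplit]; ring
    _ ≤ ε * |t - s| ^ β :=
        mul_le_mul_of_nonneg_right h4 (Real.rpow_nonneg (abs_nonneg _) _)

theorem Gmap_almostCompact (α β δ : ℝ) (hβ0 : 0 < β) (hβα : β < α) (hα1 : α ≤ 1)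
    (hδ : 0 < δ)
    (A : ℕ → ℝ → ℝ) (a : ℝ → ℝ) (X : ℕ → ℝ → ℝ) (x : ℝ → ℝ)
    (hA : ∀ n, ContinuousOn (A n) (Icc 0 1)) (ha : ContinuousOn a (Icc 0 1))
    (hAconv : TendstoUniformlyOn A a atTop (Icc 0 1))
    (hX : ∀ n, MemC0Holder α (X n)) (hx : MemC0Holder α x)
    (hXconv : TendstoHolder α X x) :
    ∃ φ : ℕ → ℕ, StrictMono φ ∧ ∃ z : ℝ → ℝ,
      MemC0Holder β z ∧
      TendstoHolder β (fun k => Gmap δ (A (φ k)) (X (φ k))) z := by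
  have hα0 : 0 < α := hβ0.trans hβα
  have h01 : (0:ℝ) ∈ Icc (0:ℝ) 1 := ⟨le_refl _, zero_le_one⟩
  -- bound for a
  obtain ⟨Ma, hMaN⟩ := isCompact_Icc.exists_bound_of_continuousOn ha
  have hMa' : ∀ u ∈ Icc (0:ℝ) 1, |a u| ≤ Ma := by
    intro u hu; simpa [Real.norm_eq_abs] using hMaN u hu
  have hMa0 : 0 ≤ Ma := le_trans (abs_nonneg _) (hMa' 0 h01)
  -- uniform closeness of A n to a
  have hAev : ∀ ε : ℝ, 0 < ε → ∀ᶠ n in atTop, ∀ u ∈ Icc (0:ℝ) 1, |A n u - a u| ≤ ε := by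
    intro ε hε
    filter_upwards [Metric.tendstoUniformlyOn_iff.mp hAconv ε hε] with n hn u hu
    have h := hn u hu
    rw [Real.dist_eq] at h
    rw [abs_sub_comm]
    exact h.le
  -- sup closeness of X n to x
  have hXev : ∀ ε : ℝ, 0 < ε → ∀ᶠ n in atTop, ∀ u ∈ Icc (0:ℝ) 1, |X n u - x u| ≤ ε := by
    intro ε hε
    obtain ⟨N1, hN1⟩ := hXconv.2 (ε/2) (half_pos hε)
    obtain ⟨N2, hN2⟩ := Metric.tendsto_atTop.mp hXconv.1 (ε/2) (half_pos hε)
    rw [eventually_atTop]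
    refine ⟨max N1 N2, fun n hn u hu => ?_⟩
    have h1 := hN1 n (le_trans (le_max_left _ _) hn) 0 h01 u hu
    have h2 := hN2 n (le_trans (le_max_right _ _) hn)
    rw [Real.dist_eq] at h2
    have hpow : |u - 0| ^ α ≤ 1 :=
      Real.rpow_le_one (abs_nonneg _)
        (by rw [sub_zero, abs_of_nonneg hu.1]; exact hu.2) hα0.le
    have e : X n u - x u = ((X n u - x u) - (X n 0 - x 0)) + (X n 0 - x 0) := by ring
    rw [e]
    refine le_trans (abs_add_le _ _) ?_
    have h3 : ε/2 * |u - 0| ^ α ≤ ε/2 * 1 :=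
      mul_le_mul_of_nonneg_left hpow (by linarith)
    linarith
  -- Hölder constants
  obtain ⟨C0, hC0⟩ := hx.1
  set Cx : ℝ := max C0 0 + 1 with hCxdef
  have hCx1 : (1:ℝ) ≤ Cx := le_add_of_nonneg_left (le_max_right C0 0)
  have hCx0 : (0:ℝ) ≤ Cx := by linarith
  have hxH : ∀ s ∈ Icc (0:ℝ) 1, ∀ t ∈ Icc (0:ℝ) 1, |x t - x s| ≤ Cx * |t - s| ^ α := by
    intro s hs t ht
    refine le_trans (hC0 s hs t ht) ?_
    have h1 : C0 ≤ Cx := by rw [hCxdef]; have := le_max_left C0 0; linarith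
    have := Real.rpow_nonneg (abs_nonneg (t - s)) α
    nlinarith
  have hXH : ∀ᶠ n in atTop, ∀ s ∈ Icc (0:ℝ) 1, ∀ t ∈ Icc (0:ℝ) 1,
      |X n t - X n s| ≤ Cx * |t - s| ^ α := by
    obtain ⟨N1, hN1⟩ := hXconv.2 1 one_pos
    rw [eventually_atTop]
    refine ⟨N1, fun n hn s hs t ht => ?_⟩
    have h1 := hN1 n hn s hs t ht
    have h2 := hC0 s hs t ht
    have e : X n t - X n s = ((X n t - x t) - (X n s - x s)) + (x t - x s) := by ring
    rw [e]
    refine le_trans (abs_add_le _ _) ?_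
    have h3 : C0 + 1 ≤ Cx := by rw [hCxdef]; have := le_max_left C0 0; linarith
    have := Real.rpow_nonneg (abs_nonneg (t - s)) α
    nlinarith
  -- uniform continuity of a
  have hUC : ∀ ε : ℝ, 0 < ε → ∃ η > 0, ∀ u ∈ Icc (0:ℝ) 1, ∀ v ∈ Icc (0:ℝ) 1,
      |u - v| < η → |a u - a v| < ε := by
    intro ε hε
    have h := isCompact_Icc.uniformContinuousOn_of_continuous ha
    rw [Metric.uniformContinuousOn_iff] at h
    obtain ⟨η, hη, h⟩ := h ε hε
    refine ⟨η, hη, fun u hu v hv huv => ?_⟩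
    have := h u hu v hv (by rwa [Real.dist_eq])
    rwa [Real.dist_eq] at this
  obtain ⟨η, hη, hηa⟩ := hUC (δ/2) (half_pos hδ)
  obtain ⟨K, hKgt⟩ := exists_nat_gt (1/η)
  have hK1 : 1 < (K:ℝ) * η := by rw [div_lt_iff₀ hη] at hKgt; linarith
  -- base index
  obtain ⟨Nstar, hNstar⟩ := eventually_atTop.mp
    ((hAev (min 1 (δ/4)) (lt_min one_pos (by linarith))).and hXH)
  -- all exit times hit 1 by step K
  have hτone : ∀ n, Nstar ≤ n → exitTimes δ (A n) K = 1 := by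
    intro n hn
    refine exitTimes_count δ (A n) ?_ hK1
    intro k hk1
    by_contra hcon
    push_neg at hcon
    have hjump := exitTimes_jump δ (A n) (hA n) k hk1
    have hm1 := exitTimes_mem δ (A n) (k+1)
    have hm0 := exitTimes_mem δ (A n) k
    have hle := exitTimes_le_succ δ (A n) k
    have hclose : |exitTimes δ (A n) (k+1) - exitTimes δ (A n) k| < η := by
      rw [abs_of_nonneg (by linarith)]; linarith
    have h2 := hηa _ hm1 _ hm0 hclose
    have h3 := (hNstar n hn).1 _ hm1
    have h4 := (hNstar n hn).1 _ hm0
    have h5 : min 1 (δ/4) ≤ δ/4 := min_le_right _ _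
    have h6 : |A n (exitTimes δ (A n) (k+1)) - A n (exitTimes δ (A n) k)|
        ≤ |A n (exitTimes δ (A n) (k+1)) - a (exitTimes δ (A n) (k+1))|
          + |a (exitTimes δ (A n) (k+1)) - a (exitTimes δ (A n) k)|
          + |a (exitTimes δ (A n) k) - A n (exitTimes δ (A n) k)| := by
      have := abs_sub_le (A n (exitTimes δ (A n) (k+1))) (a (exitTimes δ (A n) (k+1)))
        (A n (exitTimes δ (A n) k))
      have := abs_sub_le (a (exitTimes δ (A n) (k+1))) (a (exitTimes δ (A n) k))
        (A n (exitTimes δ (A n) k))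
      linarith
    rw [abs_sub_comm (a (exitTimes δ (A n) k))] at h6
    linarith
  -- Bolzano–Weierstrass in the product space
  set F : ℕ → (ℕ → ℝ) := fun m j => exitTimes δ (A (m + Nstar)) j with hF
  have hFmem : ∀ m, F m ∈ Set.pi univ (fun _ : ℕ => Icc (0:ℝ) 1) := by
    intro m j _; exact exitTimes_mem δ (A (m + Nstar)) j
  have hcomp : IsCompact (Set.pi univ (fun _ : ℕ => Icc (0:ℝ) 1)) :=
    isCompact_univ_pi (fun _ => isCompact_Icc)
  obtain ⟨L, hLmem, ψ, hψ, hψconv⟩ := hcomp.tendsto_subseq hFmem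
  set φ : ℕ → ℕ := fun k => ψ k + Nstar with hφdef
  have hφmono : StrictMono φ := fun i j hij => Nat.add_lt_add_right (hψ hij) Nstar
  have hφge : ∀ k, Nstar ≤ φ k := fun k => Nat.le_add_left _ _
  have hφt : Tendsto φ atTop atTop := hφmono.tendsto_atTop
  have hLmem' : ∀ j, L j ∈ Icc (0:ℝ) 1 := fun j => hLmem j (mem_univ j)
  have hLj : ∀ j, Tendsto (fun k => exitTimes δ (A (φ k)) j) atTop (𝓝 (L j)) := by
    intro j
    exact tendsto_pi_nhds.mp hψconv j
  -- the limit candidate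
  set z : ℝ → ℝ := fun t => ∑ j ∈ Finset.range K,
      a (L j) * (x (min t (L (j+1))) - x (min t (L j))) with hzdef
  -- uniform bound on A (φ k)
  have hAbd : ∀ k, ∀ u ∈ Icc (0:ℝ) 1, |A (φ k) u| ≤ Ma + 1 := by
    intro k u hu
    have h1 := (hNstar (φ k) (hφge k)).1 u hu
    have h2 := hMa' u hu
    have h3 : min 1 (δ/4) ≤ 1 := min_le_left _ _
    have := abs_sub_le (A (φ k) u) (a u) 0
    simp only [sub_zero] at this
    linarith
  have hMa1 : ∀ u ∈ Icc (0:ℝ) 1, |a u| ≤ Ma + 1 := fun u hu => by linarith [hMa' u hu]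
  set CG : ℝ := (K:ℝ) * (2*(Ma+1)*Cx) with hCGdef
  have hCG0 : 0 ≤ CG := by positivity
  -- Hölder bound for the G's
  have hGH : ∀ k, ∀ s ∈ Icc (0:ℝ) 1, ∀ t ∈ Icc (0:ℝ) 1,
      |Gmap δ (A (φ k)) (X (φ k)) t - Gmap δ (A (φ k)) (X (φ k)) s| ≤ CG * |t - s| ^ α := by
    intro k s hs t ht
    rw [Gmap_eq_sum δ (A (φ k)) (X (φ k)) (hτone _ (hφge k)) t,
        Gmap_eq_sum δ (A (φ k)) (X (φ k)) (hτone _ (hφge k)) s]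
    exact sum_inc_bound (A (φ k)) (X (φ k)) (exitTimes δ (A (φ k)))
      (exitTimes_mem δ (A (φ k))) hα0 (by linarith) hCx0 (hAbd k)
      ((hNstar (φ k) (hφge k)).2) s hs t ht
  -- Hölder bound for z
  have hzH : ∀ s ∈ Icc (0:ℝ) 1, ∀ t ∈ Icc (0:ℝ) 1, |z t - z s| ≤ CG * |t - s| ^ α := by
    intro s hs t ht
    simp only [hzdef]
    exact sum_inc_bound a x L hLmem' hα0 (by linarith) hCx0 hMa1 hxH s hs t ht
  -- β-Hölder bound for z
  have hzHβ : HolderWithOn CG β z := by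
    intro s hs t ht
    rcases eq_or_lt_of_le (abs_nonneg (t - s)) with h0 | h0
    · have he : t - s = 0 := abs_eq_zero.mp h0.symm
      have h1 := hzH s hs t ht
      rw [he, abs_zero] at h1 ⊢
      rw [Real.zero_rpow (by linarith : α ≠ 0)] at h1
      rw [Real.zero_rpow (by linarith : β ≠ 0)]
      simpa using h1
    · have hle1 : |t - s| ≤ 1 := by
        rw [abs_le]; constructor <;> [linarith [hs.2, ht.1]; linarith [ht.2, hs.1]]
      have h2 : |t - s| ^ α ≤ |t - s| ^ β :=
        Real.rpow_le_rpow_of_exponent_ge h0 hle1 hβα.le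
      refine le_trans (hzH s hs t ht) ?_
      nlinarith
  -- uniform convergence of the G's to z
  set B2 : ℝ := 2*Cx + 2*(Ma+1) + 2*(Ma+1)*Cx with hB2def
  have hB2pos : 0 < B2 := by nlinarith
  have hU : ∀ ε : ℝ, 0 < ε → ∀ᶠ k in atTop, ∀ t ∈ Icc (0:ℝ) 1,
      |Gmap δ (A (φ k)) (X (φ k)) t - z t| ≤ ε := by
    intro ε hε
    set ε1 : ℝ := ε / ((K:ℝ) * B2 + 1) with hε1def
    have hε1 : 0 < ε1 := div_pos hε (by positivity)
    obtain ⟨ηa, hηa0, hηaP⟩ := hUC ε1 hε1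
    set η1 : ℝ := min (ηa/2) (ε1 ^ (α⁻¹)) with hη1def
    have hη10 : 0 < η1 := lt_min (half_pos hηa0) (Real.rpow_pos_of_pos hε1 _)
    have hτev : ∀ᶠ k in atTop, ∀ j ∈ Finset.range (K+1),
        |exitTimes δ (A (φ k)) j - L j| ≤ η1 := by
      rw [eventually_all_finset]
      intro j _
      obtain ⟨N, hN⟩ := Metric.tendsto_atTop.mp (hLj j) η1 hη10
      rw [eventually_atTop]
      refine ⟨N, fun k hk => ?_⟩
      have := hN k hk
      rw [Real.dist_eq] at this
      exact this.le
    filter_upwards [hτev, hφt.eventually (hAev ε1 hε1), hφt.eventually (hXev ε1 hε1)]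
      with k hτk hAk hXk t ht
    rw [Gmap_eq_sum δ (A (φ k)) (X (φ k)) (hτone _ (hφge k)) t]
    simp only [hzdef]
    rw [← Finset.sum_sub_distrib]
    refine le_trans (Finset.abs_sum_le_sum_abs _ _) ?_
    have hterm : ∀ j ∈ Finset.range K,
        |A (φ k) (exitTimes δ (A (φ k)) j) *
            (X (φ k) (min t (exitTimes δ (A (φ k)) (j+1))) -
             X (φ k) (min t (exitTimes δ (A (φ k)) j)))
          - a (L j) * (x (min t (L (j+1))) - x (min t (L j)))| ≤ ε1 * B2 := by
      intro j hj
      have hjK : j < K := Finset.mem_range.mp hj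
      have hd1 : |exitTimes δ (A (φ k)) (j+1) - L (j+1)| ≤ η1 :=
        hτk (j+1) (Finset.mem_range.mpr (by omega))
      have hd0 : |exitTimes δ (A (φ k)) j - L j| ≤ η1 :=
        hτk j (Finset.mem_range.mpr (by omega))
      set τ1 := exitTimes δ (A (φ k)) (j+1) with hτ1
      set τ0 := exitTimes δ (A (φ k)) j with hτ0
      have hτ1m : τ1 ∈ Icc (0:ℝ) 1 := exitTimes_mem δ (A (φ k)) (j+1)
      have hτ0m : τ0 ∈ Icc (0:ℝ) 1 := exitTimes_mem δ (A (φ k)) j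
      have hL1m := hLmem' (j+1)
      have hL0m := hLmem' j
      set m1 := min t τ1 with hm1
      set m0 := min t τ0 with hm0
      set n1 := min t (L (j+1)) with hn1
      set n0 := min t (L j) with hn0
      have hm1m : m1 ∈ Icc (0:ℝ) 1 := min_mem_Icc01 ht hτ1m
      have hm0m : m0 ∈ Icc (0:ℝ) 1 := min_mem_Icc01 ht hτ0m
      have hn1m : n1 ∈ Icc (0:ℝ) 1 := min_mem_Icc01 ht hL1m
      have hn0m : n0 ∈ Icc (0:ℝ) 1 := min_mem_Icc01 ht hL0m
      -- decomposition
      have edec : A (φ k) τ0 * (X (φ k) m1 - X (φ k) m0) - a (L j) * (x n1 - x n0)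
          = (A (φ k) τ0 - a (L j)) * (X (φ k) m1 - X (φ k) m0)
            + a (L j) * ((X (φ k) m1 - x m1) - (X (φ k) m0 - x m0))
            + a (L j) * ((x m1 - x n1) - (x m0 - x n0)) := by ring
      rw [edec]
      -- bound pieces
      have b1 : |A (φ k) τ0 - a (L j)| ≤ 2 * ε1 := by
        have p1 := hAk τ0 hτ0m
        have p2 : |a τ0 - a (L j)| < ε1 := by
          refine hηaP τ0 hτ0m (L j) hL0m ?_
          have : η1 ≤ ηa/2 := min_le_left _ _
          calc |τ0 - L j| ≤ η1 := hd0
          _ < ηa := by linarith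
        have := abs_sub_le (A (φ k) τ0) (a τ0) (a (L j))
        linarith
      have b2 : |X (φ k) m1 - X (φ k) m0| ≤ Cx := by
        have h := (hNstar (φ k) (hφge k)).2 m0 hm0m m1 hm1m
        have hle1 : |m1 - m0| ≤ 1 := by
          rw [abs_le]
          constructor <;> [linarith [hm0m.2, hm1m.1]; linarith [hm1m.2, hm0m.1]]
        have hp : |m1 - m0| ^ α ≤ 1 := Real.rpow_le_one (abs_nonneg _) hle1 hα0.le
        nlinarith
      have b3 : |(X (φ k) m1 - x m1) - (X (φ k) m0 - x m0)| ≤ 2 * ε1 := by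
        have p1 := hXk m1 hm1m
        have p2 := hXk m0 hm0m
        have := abs_sub (X (φ k) m1 - x m1) (X (φ k) m0 - x m0)
        linarith
      have hpowbound : ∀ u v : ℝ, |u - v| ≤ η1 → |u - v| ^ α ≤ ε1 := by
        intro u v huv
        have h1 : |u - v| ≤ ε1 ^ (α⁻¹) := le_trans huv (min_le_right _ _)
        have h2 := Real.rpow_le_rpow (abs_nonneg _) h1 hα0.le
        rwa [Real.rpow_inv_rpow hε1.le hα0.ne'] at h2
      have b4 : |x m1 - x n1| ≤ Cx * ε1 := by
        have h := hxH n1 hn1m m1 hm1m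
        have hb : |m1 - n1| ≤ η1 := le_trans (abs_min_sub_min'' t τ1 (L (j+1))) hd1
        have hp : |m1 - n1| ^ α ≤ ε1 := hpowbound _ _ hb
        nlinarith
      have b5 : |x m0 - x n0| ≤ Cx * ε1 := by
        have h := hxH n0 hn0m m0 hm0m
        have hb : |m0 - n0| ≤ η1 := le_trans (abs_min_sub_min'' t τ0 (L j)) hd0
        have hp : |m0 - n0| ^ α ≤ ε1 := hpowbound _ _ hb
        nlinarith
      have b6 : |(x m1 - x n1) - (x m0 - x n0)| ≤ Cx*ε1 + Cx*ε1 :=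
        le_trans (abs_sub _ _) (by linarith)
      have haL : |a (L j)| ≤ Ma := hMa' _ hL0m
      refine le_trans (abs_add_le _ _) ?_
      refine le_trans (add_le_add_left (abs_add_le _ _) _) ?_
      rw [abs_mul, abs_mul, abs_mul]
      have t1 : |A (φ k) τ0 - a (L j)| * |X (φ k) m1 - X (φ k) m0| ≤ 2*ε1 * Cx :=
        mul_le_mul b1 b2 (abs_nonneg _) (by linarith)
      have t2 : |a (L j)| * |(X (φ k) m1 - x m1) - (X (φ k) m0 - x m0)| ≤ Ma * (2*ε1) :=
        mul_le_mul haL b3 (abs_nonneg _) hMa0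
      have t3 : |a (L j)| * |(x m1 - x n1) - (x m0 - x n0)| ≤ Ma * (Cx*ε1 + Cx*ε1) :=
        mul_le_mul haL b6 (abs_nonneg _) hMa0
      have hn : 0 ≤ ε1 := hε1.le
      rw [hB2def]
      nlinarith
    refine le_trans (Finset.sum_le_sum hterm) ?_
    rw [Finset.sum_const, Finset.card_range, nsmul_eq_mul]
    have key : ε1 * ((K:ℝ) * B2) ≤ ε := by
      rw [hε1def, div_mul_eq_mul_div, div_le_iff₀ (by positivity)]
      nlinarith [hε.le, hB2pos.le, (Nat.cast_nonneg K : (0:ℝ) ≤ (K:ℝ))]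
    calc (K:ℝ) * (ε1 * B2) = ε1 * ((K:ℝ) * B2) := by ring
    _ ≤ ε := key
  -- conclusion
  refine ⟨φ, hφmono, z, ⟨⟨CG, hzHβ⟩, ?_⟩, ?_, ?_⟩
  · -- small-scale β-Hölder control of z
    intro ε hε
    obtain ⟨ρ, hρ0, hρ1, hP⟩ := holder_small hβ0 hβα hCG0 hε
    exact ⟨ρ, hρ0, fun s hs t ht h => hP z hzH s hs t ht h⟩
  · -- convergence at 0
    have hz0 : z 0 = 0 := by
      have hmin : ∀ j : ℕ, min (0:ℝ) (L j) = 0 := fun j => min_eq_left (hLmem' j).1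
      simp only [hzdef]
      simp [hmin]
    have hG0 : ∀ k, Gmap δ (A (φ k)) (X (φ k)) 0 = 0 := fun k => Gmap_zero δ _ _
    simp only [hG0, hz0]
    exact tendsto_const_nhds
  · -- β-Hölder convergence
    intro ε hε
    obtain ⟨ρ, hρ0, hρ1, hP⟩ := holder_small (C := CG + CG) hβ0 hβα (by linarith) hε
    have hρβ : 0 < ρ ^ β := Real.rpow_pos_of_pos hρ0 β
    have hε2 : 0 < ε * ρ ^ β / 2 := by positivity
    obtain ⟨N, hN⟩ := eventually_atTop.mp (hU _ hε2)
    refine ⟨N, fun k hk s hs t ht => ?_⟩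
    have hfH : ∀ s' ∈ Icc (0:ℝ) 1, ∀ t' ∈ Icc (0:ℝ) 1,
        |(Gmap δ (A (φ k)) (X (φ k)) t' - z t') - (Gmap δ (A (φ k)) (X (φ k)) s' - z s')|
          ≤ (CG + CG) * |t' - s'| ^ α := by
      intro s' hs' t' ht'
      have h1 := hGH k s' hs' t' ht'
      have h2 := hzH s' hs' t' ht'
      have e : (Gmap δ (A (φ k)) (X (φ k)) t' - z t') - (Gmap δ (A (φ k)) (X (φ k)) s' - z s')
          = (Gmap δ (A (φ k)) (X (φ k)) t' - Gmap δ (A (φ k)) (X (φ k)) s') - (z t' - z s') := by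
        ring
      rw [e]
      refine le_trans (abs_sub _ _) ?_
      linarith
    by_cases hcase : |t - s| ≤ ρ
    · exact hP (fun u => Gmap δ (A (φ k)) (X (φ k)) u - z u) hfH s hs t ht hcase
    · push_neg at hcase
      have h1 := hN k hk t ht
      have h2 := hN k hk s hs
      have h3 : |(Gmap δ (A (φ k)) (X (φ k)) t - z t) - (Gmap δ (A (φ k)) (X (φ k)) s - z s)|
          ≤ |Gmap δ (A (φ k)) (X (φ k)) t - z t| + |Gmap δ (A (φ k)) (X (φ k)) s - z s| :=
        abs_sub _ _
      have h4 : ρ ^ β ≤ |t - s| ^ β := Real.rpow_le_rpow hρ0.le hcase.le hβ0.le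
      have h5 := mul_le_mul_of_nonneg_left h4 hε.le
      linarith
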